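/- arXiv:2409.12727 — 2 statements merged into one kernel-verified Lean document; each statement's English description precedes it below -/
import Mathlib

section
/- Let P = (P_1,…,P_{t_1}) and Q = (Q_1,…,Q_{t_2}) with t_1, t_2 ≥ 1, m_1 = max_i deg P_i, m_2 = max_i deg Q_i, m_1 ≥ m_2, t_1 + t_2 ≤ m_1 + 1. If m_2 = m_1 − t_1 + 1, then dp(P_1,…,P_{t_1},Q_1,…,Q_{t_2}) = dp(dp(P), Q_1, …, Q_{t_2}). -/
open Polynomial

noncomputable section

variable {R : Type*} [CommRing R]

/-- Column selection for the determinant polynomial: the first `t - 1` columns of a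
`t × q` matrix, and then (for the `j`-th coefficient) the column `q - j` (1-indexed),
i.e. column `q - 1 - j` (0-indexed). -/
def colSel (t q j : ℕ) (k : Fin t) : ℕ :=
  if (k : ℕ) + 1 < t then (k : ℕ) else q - 1 - j

/-- Determinant polynomial of the coefficient matrix of the list of polynomials `L`,
where the coefficient matrix has `q` columns: its `(i,k)` entry (0-indexed) is the
coefficient of `x^(q-1-k)` in `L.get i`.  So
`dpListQ L q = ∑_{j=0}^{q - t} det [M_1 ⋯ M_{t-1} M_{q-j}] • x^j` with `t = L.length`. -/
noncomputable def dpListQ (L : List (Polynomial R)) (q : ℕ) : Polynomial R :=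
  ∑ j ∈ Finset.range (q + 1 - L.length),
    Polynomial.C (Matrix.det (Matrix.of fun i k : Fin L.length =>
      (L.get i).coeff (q - 1 - colSel L.length q j k))) * Polynomial.X ^ j

/-- The maximum of the degrees of the polynomials in `L`. -/
def maxDeg (L : List (Polynomial R)) : ℕ := (L.map Polynomial.natDegree).foldr max 0

/-- `dp(P) = dp(cm(P))`: the coefficient matrix `cm(P)` has `m + 1` columns where
`m` is the maximal degree. -/
noncomputable def dpList (L : List (Polynomial R)) : Polynomial R :=
  dpListQ L (maxDeg L + 1)

/-- `pcdp(P)`: the coefficient of `x^(q - p)` in `dp(P)` (`p` rows, `q` columns). -/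
noncomputable def pcdpList (L : List (Polynomial R)) : R :=
  (dpList L).coeff (maxDeg L + 1 - L.length)

/-- The list `x^(m-1) * g, x^(m-2) * g, …, x^0 * g`. -/
noncomputable def shifts (g : Polynomial R) (m : ℕ) : List (Polynomial R) :=
  (List.range m).reverse.map fun s => Polynomial.X ^ s * g

/-- The coefficient ring `ℤ[b, b*]`: polynomials over `ℤ` in independent indeterminates
indexed by a tag (`false` for the `b`'s, `true` for the `b*`'s) and a pair of indices. -/
abbrev Rb : Type := MvPolynomial (Bool × ℕ × ℕ) ℤ

/-- The generic polynomials `P_i = ∑_{j=0}^{p_i} b_{i j} x^j` with independent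
indeterminate coefficients. -/
noncomputable def genPoly (b : Bool) (t : ℕ) (deg : Fin t → ℕ) : List (Polynomial Rb) :=
  List.ofFn fun i : Fin t =>
    ∑ j ∈ Finset.range (deg i + 1),
      Polynomial.C (MvPolynomial.X (b, (i : ℕ), j)) * Polynomial.X ^ j

set_option linter.unreachableTactic false
set_option linter.unusedTactic false
set_option linter.unusedVariables false

namespace DPAux

variable {R : Type*} [CommRing R]

/-- LHS matrix of the key determinant identity. -/
def keyL (n s : ℕ) (u v w : ℕ → ℕ → R) : Matrix (Fin (s+1+n)) (Fin (s+1+n)) R :=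
  Matrix.of fun i k =>
    if (i : ℕ) < s + 1 then
      (if (k : ℕ) < s then u i k else v i ((k : ℕ) - s))
    else
      (if (k : ℕ) < s then 0 else w ((i : ℕ) - (s + 1)) ((k : ℕ) - s))

/-- The small matrices appearing in row 0 of the RHS. -/
def keyS (s : ℕ) (u v : ℕ → ℕ → R) (c : ℕ) : Matrix (Fin (s+1)) (Fin (s+1)) R :=
  Matrix.of fun i k => if (k : ℕ) < s then u i k else v i c

/-- RHS matrix of the key determinant identity. -/
def keyR (n s : ℕ) (u v w : ℕ → ℕ → R) : Matrix (Fin (1+n)) (Fin (1+n)) R :=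
  Matrix.of fun i k => if (i : ℕ) = 0 then (keyS s u v k).det else w ((i : ℕ) - 1) k

def shiftU (u : ℕ → ℕ → R) (i : ℕ) : ℕ → ℕ → R := fun r c => u (if r < i then r else r + 1) (c + 1)
def shiftV (v : ℕ → ℕ → R) (i : ℕ) : ℕ → ℕ → R := fun r c => v (if r < i then r else r + 1) c

lemma det_updateRow_finset_sum {m : ℕ} (M : Matrix (Fin m) (Fin m) R) (j : Fin m)
    {α : Type*} (t : Finset α) (r : α → Fin m → R) :
    (M.updateRow j (∑ a ∈ t, r a)).det = ∑ a ∈ t, (M.updateRow j (r a)).det :=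
  (Matrix.detRowAlternating : (Fin m → R) [⋀^Fin m]→ₗ[R] R).toMultilinearMap.map_update_sum t j r M

lemma val_succAbove {m : ℕ} (i : Fin (m+1)) (r : Fin m) :
    ((i.succAbove r) : ℕ) = if (r : ℕ) < (i : ℕ) then (r : ℕ) else (r : ℕ) + 1 := by
  rw [Fin.succAbove]
  by_cases h : r.castSucc < i
  · rw [if_pos h, if_pos (by simpa [Fin.lt_def] using h)]
    rfl
  · rw [if_neg h, if_neg (by simpa [Fin.lt_def] using h)]
    rfl

lemma key (n : ℕ) : ∀ (s : ℕ) (u v w : ℕ → ℕ → R),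
    (keyL n s u v w).det = (keyR n s u v w).det := by
  intro s
  induction s with
  | zero =>
    intro u v w
    have h : keyL n 0 u v w = keyR n 0 u v w := by
      ext i k
      simp only [keyL, keyR, Matrix.of_apply]
      by_cases hi : (i : ℕ) = 0
      · rw [if_pos (show (i:ℕ) < 0+1 by omega), if_neg (Nat.not_lt_zero _), if_pos hi,
          Matrix.det_fin_one]
        simp [keyS, hi]
      · rw [if_neg (show ¬ (i:ℕ) < 0+1 by omega), if_neg (Nat.not_lt_zero _), if_neg hi]
        simp
    exact congrArg Matrix.det h
  | succ s ih =>
    intro u v w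
    set e : Fin (s+1+n+1) ≃ Fin (s+1+1+n) := finCongr (by omega) with he
    rw [← Matrix.det_submatrix_equiv_self e]
    have hcoe : ∀ x : Fin (s+1+n+1), ((e x : Fin (s+1+1+n)) : ℕ) = (x : ℕ) := by
      intro x; rw [he]; simp
    have hA0 : ∀ i : Fin (s+1+n+1),
        ((keyL n (s+1) u v w).submatrix e e) i 0
          = if (i:ℕ) < s+1+1 then u i 0 else 0 := by
      intro i
      have hbi := i.isLt
      simp only [Matrix.submatrix_apply, keyL, Matrix.of_apply, hcoe]
      have h0 : (((0 : Fin (s+1+n+1)) : ℕ)) = 0 := rfl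
      rw [h0]
      split_ifs <;> first | rfl | omega
    have hminor : ∀ i : Fin (s+1+n+1), (i:ℕ) < s+1+1 →
        (((keyL n (s+1) u v w).submatrix e e).submatrix i.succAbove Fin.succ)
          = keyL n s (shiftU u i) (shiftV v i) w := by
      intro i hi
      ext r c
      have hbr := r.isLt
      have hbc := c.isLt
      simp only [Matrix.submatrix_apply, keyL, Matrix.of_apply, hcoe, Fin.val_succ,
        val_succAbove, shiftU, shiftV]
      split_ifs <;> first | rfl | omega | (congr 1 <;> omega)
    have hterm : ∀ i : Fin (s+1+n+1),
        (-1 : R)^(i:ℕ) * (((keyL n (s+1) u v w).submatrix e e) i 0)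
            * (((keyL n (s+1) u v w).submatrix e e).submatrix i.succAbove Fin.succ).det
          = (fun j : ℕ => if j < s+1+1 then
              (-1 : R)^j * u j 0 * (keyR n s (shiftU u j) (shiftV v j) w).det else 0) (i : ℕ) := by
      intro i
      by_cases hi : (i:ℕ) < s+1+1
      · rw [hA0, if_pos hi, hminor i hi, ih]
        simp only [if_pos hi]
      · rw [hA0, if_neg hi]
        simp only [if_neg hi, mul_zero, zero_mul]
    rw [Matrix.det_succ_column_zero]
    rw [Finset.sum_congr rfl (fun i _ => hterm i),
      Fin.sum_univ_eq_sum_range (fun j : ℕ => if j < s+1+1 then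
        (-1 : R)^j * u j 0 * (keyR n s (shiftU u j) (shiftV v j) w).det else 0) (s+1+n+1)]
    rw [← Finset.sum_subset (Finset.range_subset_range.mpr (show s+1+1 ≤ s+1+n+1 by omega))
      (fun x _ hx => if_neg (by simpa using hx))]
    rw [Finset.sum_congr rfl (fun x hx => if_pos (Finset.mem_range.mp hx))]
    -- now compute the RHS determinant
    set j0 : Fin (1+n) := ⟨0, by omega⟩ with hj0
    have hrow : ∀ k : ℕ, (keyS (s+1) u v k).det
        = ∑ j ∈ Finset.range (s+1+1),
            (-1 : R)^j * u j 0 * (keyS s (shiftU u j) (shiftV v j) k).det := by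
      intro k
      rw [Matrix.det_succ_column_zero]
      have hterm2 : ∀ i : Fin (s+1+1),
          (-1 : R)^(i:ℕ) * (keyS (s+1) u v k i 0)
              * ((keyS (s+1) u v k).submatrix i.succAbove Fin.succ).det
            = (fun j : ℕ => (-1 : R)^j * u j 0 * (keyS s (shiftU u j) (shiftV v j) k).det) (i:ℕ) := by
        intro i
        have h1 : keyS (s+1) u v k i 0 = u i 0 := by
          simp [keyS]
        have h2 : (keyS (s+1) u v k).submatrix i.succAbove Fin.succ
            = keyS s (shiftU u i) (shiftV v i) k := by
          ext r c
          have hbr := r.isLt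
          have hbc := c.isLt
          have hbi := i.isLt
          simp only [Matrix.submatrix_apply, keyS, Matrix.of_apply, Fin.val_succ,
            val_succAbove, shiftU, shiftV]
          split_ifs <;> first | rfl | omega | (congr 1 <;> omega)
        rw [h1, h2]
      rw [Finset.sum_congr rfl (fun i _ => hterm2 i),
        Fin.sum_univ_eq_sum_range (fun j : ℕ =>
          (-1 : R)^j * u j 0 * (keyS s (shiftU u j) (shiftV v j) k).det) (s+1+1)]
    have hupd : keyR n (s+1) u v w
        = (keyR n s (shiftU u 0) (shiftV v 0) w).updateRow j0
            (∑ j ∈ Finset.range (s+1+1), fun k : Fin (1+n) =>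
              (-1 : R)^j * u j 0 * (keyS s (shiftU u j) (shiftV v j) (k:ℕ)).det) := by
      ext i k
      by_cases hi : (i:ℕ) = 0
      · rw [show i = j0 from Fin.ext hi, Matrix.updateRow_self]
        have h3 : keyR n (s+1) u v w j0 k = (keyS (s+1) u v (k:ℕ)).det := by
          simp only [keyR, Matrix.of_apply]
          simp [hj0]
        rw [h3, hrow, Finset.sum_apply]
      · have hij : i ≠ j0 := fun h => hi (by rw [h])
        rw [Matrix.updateRow_ne hij]
        simp only [keyR, Matrix.of_apply, if_neg hi]
    rw [hupd, det_updateRow_finset_sum]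
    refine Finset.sum_congr rfl fun j hj => ?_
    have hsc : (fun k : Fin (1+n) =>
          (-1 : R)^j * u j 0 * (keyS s (shiftU u j) (shiftV v j) (k:ℕ)).det)
        = ((-1 : R)^j * u j 0) • (fun k : Fin (1+n) =>
            (keyS s (shiftU u j) (shiftV v j) (k:ℕ)).det) := by
      funext k
      simp [mul_assoc]
    rw [hsc, Matrix.det_updateRow_smul]
    have hfix : (keyR n s (shiftU u 0) (shiftV v 0) w).updateRow j0
          (fun k : Fin (1+n) => (keyS s (shiftU u j) (shiftV v j) (k:ℕ)).det)
        = keyR n s (shiftU u j) (shiftV v j) w := by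
      ext i k
      by_cases hi : (i:ℕ) = 0
      · rw [show i = j0 from Fin.ext hi, Matrix.updateRow_self]
        simp only [keyR, Matrix.of_apply]
        simp [hj0]
      · have hij : i ≠ j0 := fun h => hi (by rw [h])
        rw [Matrix.updateRow_ne hij]
        simp only [keyR, Matrix.of_apply, if_neg hi]
    rw [hfix]

lemma maxDeg_cons (a : Polynomial R) (L : List (Polynomial R)) :
    maxDeg (a :: L) = max a.natDegree (maxDeg L) := rfl

lemma maxDeg_append (L₁ L₂ : List (Polynomial R)) :
    maxDeg (L₁ ++ L₂) = max (maxDeg L₁) (maxDeg L₂) := by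
  induction L₁ with
  | nil =>
    show maxDeg L₂ = max (maxDeg ([] : List (Polynomial R))) (maxDeg L₂)
    rw [show maxDeg ([] : List (Polynomial R)) = 0 from rfl]
    omega
  | cons a L ih =>
    rw [List.cons_append, maxDeg_cons, maxDeg_cons, ih, max_assoc]

lemma natDegree_getD_le (L : List (Polynomial R)) : ∀ i : ℕ, i < L.length →
    (L.getD i 0).natDegree ≤ maxDeg L := by
  induction L with
  | nil => intro i h; simp at h
  | cons a L ih =>
    intro i h
    cases i with
    | zero =>
      rw [maxDeg_cons]
      simp only [List.getD_cons_zero]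
      omega
    | succ i =>
      rw [List.getD_cons_succ, maxDeg_cons]
      have := ih i (by simpa using h)
      omega

lemma coeff_CXsum (t : ℕ) (a : ℕ → R) (d : ℕ) :
    (∑ j ∈ Finset.range (t+1), Polynomial.C (a j) * Polynomial.X ^ j).coeff d
      = if d < t + 1 then a d else 0 := by
  rw [Polynomial.finset_sum_coeff]
  simp only [Polynomial.coeff_C_mul, Polynomial.coeff_X_pow, mul_ite, mul_one, mul_zero]
  rw [Finset.sum_ite_eq (Finset.range (t+1)) d a]
  simp [Finset.mem_range]

lemma dpListQ_congr (L : List (Polynomial R)) (q N : ℕ) (h : L.length = N)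
    (f : ℕ → Polynomial R) (hf : ∀ i : Fin L.length, L.get i = f (i : ℕ)) :
    dpListQ L q = ∑ j ∈ Finset.range (q + 1 - N),
      Polynomial.C (Matrix.det (Matrix.of fun i k : Fin N =>
        (f (i : ℕ)).coeff (q - 1 - colSel N q j k))) * Polynomial.X ^ j := by
  subst h
  unfold dpListQ
  refine Finset.sum_congr rfl fun j _ => ?_
  have hMat : (Matrix.of fun i k : Fin L.length =>
      (L.get i).coeff (q - 1 - colSel L.length q j k))
      = (Matrix.of fun i k : Fin L.length =>
        (f (i : ℕ)).coeff (q - 1 - colSel L.length q j k)) := by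
    ext i k
    rw [Matrix.of_apply, Matrix.of_apply, hf i]
  rw [hMat]

theorem dp_append_nested_general (L₁ L₂ : List (Polynomial R)) (h₁ : 1 ≤ L₁.length)
    (hm : maxDeg L₂ ≤ maxDeg L₁)
    (hcase : maxDeg L₂ + L₁.length = maxDeg L₁ + 1) :
    dpList (L₁ ++ L₂) = dpList (dpList L₁ :: L₂) := by
  obtain ⟨s, hs⟩ : ∃ s, L₁.length = s + 1 := ⟨L₁.length - 1, by omega⟩
  set n := L₂.length with hn
  set m₁ := maxDeg L₁ with hm₁
  set m₂ := maxDeg L₂ with hm₂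
  have hm1 : m₁ = m₂ + s := by omega
  set Pn : ℕ → Polynomial R := fun i => L₁.getD i 0 with hPn
  set Qn : ℕ → Polynomial R := fun i => L₂.getD i 0 with hQn
  set u : ℕ → ℕ → R := fun i k => (Pn i).coeff (m₁ - k) with hu
  set cdet : ℕ → R := fun d => Matrix.det (Matrix.of fun i k : Fin (s+1) =>
    if (k : ℕ) < s then u (i : ℕ) (k : ℕ) else (Pn (i : ℕ)).coeff d) with hcdet
  have hget1 : ∀ i : Fin L₁.length, L₁.get i = Pn (i : ℕ) := by
    intro i
    rw [List.get_eq_getElem, hPn]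
    exact (List.getD_eq_getElem L₁ 0 i.isLt).symm
  have hdpP : dpList L₁ = ∑ j ∈ Finset.range (m₂ + 1),
      Polynomial.C (cdet j) * Polynomial.X ^ j := by
    have h0 : dpList L₁ = dpListQ L₁ (m₁ + 1) := rfl
    rw [h0, dpListQ_congr L₁ (m₁+1) (s+1) hs Pn hget1,
      show m₁ + 1 + 1 - (s+1) = m₂ + 1 by omega]
    refine Finset.sum_congr rfl fun j hj => ?_
    have hj' : j ≤ m₂ := by have := Finset.mem_range.mp hj; omega
    have hMat : (Matrix.of fun i k : Fin (s+1) =>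
        (Pn (i : ℕ)).coeff (m₁ + 1 - 1 - colSel (s+1) (m₁+1) j k))
        = (Matrix.of fun i k : Fin (s+1) =>
          if (k : ℕ) < s then u (i : ℕ) (k : ℕ) else (Pn (i : ℕ)).coeff j) := by
      ext i k
      have hbk := k.isLt
      simp only [Matrix.of_apply, colSel, hu]
      split_ifs <;> (congr 1 <;> omega)
    rw [hMat]
  have hdeg : (dpList L₁).natDegree ≤ m₂ := by
    rw [hdpP]
    refine Polynomial.natDegree_sum_le_of_forall_le _ _ fun j hj => ?_
    exact le_trans (Polynomial.natDegree_C_mul_X_pow_le _ _)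
      (by have := Finset.mem_range.mp hj; omega)
  have hcoeff : ∀ d : ℕ, d ≤ m₂ → (dpList L₁).coeff d = cdet d := by
    intro d hd
    rw [hdpP, coeff_CXsum]
    rw [if_pos (show d < m₂ + 1 by omega)]
  have hmax12 : maxDeg (L₁ ++ L₂) = m₁ := by
    rw [maxDeg_append]
    omega
  have hlen : (L₁ ++ L₂).length = s + 1 + n := by
    rw [List.length_append, hs]
  have hgetA : ∀ i : Fin (L₁ ++ L₂).length,
      (L₁ ++ L₂).get i = (fun i : ℕ => if i < s+1 then Pn i else Qn (i - (s+1))) (i : ℕ) := by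
    intro i
    have hbi : (i : ℕ) < s + 1 + n := by have := i.isLt; omega
    rw [List.get_eq_getElem, List.getElem_append]
    dsimp only
    by_cases hi : (i : ℕ) < L₁.length
    · rw [dif_pos hi, if_pos (by omega)]
      exact (List.getD_eq_getElem L₁ 0 hi).symm
    · rw [dif_neg hi, if_neg (by omega)]
      rw [show (i : ℕ) - (s+1) = (i : ℕ) - L₁.length by omega]
      exact (List.getD_eq_getElem L₂ 0 (by omega)).symm
  have hLHS : dpList (L₁ ++ L₂) = ∑ j ∈ Finset.range (m₂ + 1 - n),
      Polynomial.C (Matrix.det (Matrix.of fun i k : Fin (s+1+n) =>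
        ((fun i : ℕ => if i < s+1 then Pn i else Qn (i - (s+1))) (i : ℕ)).coeff
          (m₁ + 1 - 1 - colSel (s+1+n) (m₁+1) j k))) * Polynomial.X ^ j := by
    have h0 : dpList (L₁ ++ L₂) = dpListQ (L₁ ++ L₂) (maxDeg (L₁ ++ L₂) + 1) := rfl
    rw [h0, hmax12, dpListQ_congr (L₁ ++ L₂) (m₁+1) (s+1+n) hlen (fun i : ℕ => if i < s+1 then Pn i else Qn (i - (s+1))) hgetA,
      show m₁ + 1 + 1 - (s+1+n) = m₂ + 1 - n by omega]
  have hmaxc : maxDeg (dpList L₁ :: L₂) = m₂ := by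
    rw [maxDeg_cons]
    omega
  have hlenc : (dpList L₁ :: L₂).length = 1 + n := by
    rw [List.length_cons]
    omega
  have hgetC : ∀ i : Fin (dpList L₁ :: L₂).length,
      (dpList L₁ :: L₂).get i
        = (fun i : ℕ => if i = 0 then dpList L₁ else Qn (i - 1)) (i : ℕ) := by
    intro i
    obtain ⟨iv, hiv⟩ := i
    rw [List.get_eq_getElem]
    dsimp only
    cases iv with
    | zero => simp
    | succ iv =>
      rw [List.getElem_cons_succ, if_neg (by omega), hQn]
      have h2 : iv < L₂.length := by
        have := hiv
        rw [List.length_cons] at this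
        omega
      rw [show iv + 1 - 1 = iv by omega]
      exact (List.getD_eq_getElem L₂ 0 h2).symm
  have hRHS : dpList (dpList L₁ :: L₂) = ∑ j ∈ Finset.range (m₂ + 1 - n),
      Polynomial.C (Matrix.det (Matrix.of fun i k : Fin (1+n) =>
        ((fun i : ℕ => if i = 0 then dpList L₁ else Qn (i - 1)) (i : ℕ)).coeff
          (m₂ + 1 - 1 - colSel (1+n) (m₂+1) j k))) * Polynomial.X ^ j := by
    have h0 : dpList (dpList L₁ :: L₂)
        = dpListQ (dpList L₁ :: L₂) (maxDeg (dpList L₁ :: L₂) + 1) := rfl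
    rw [h0, hmaxc, dpListQ_congr (dpList L₁ :: L₂) (m₂+1) (1+n) hlenc (fun i : ℕ => if i = 0 then dpList L₁ else Qn (i - 1)) hgetC,
      show m₂ + 1 + 1 - (1+n) = m₂ + 1 - n by omega]
  rw [hLHS, hRHS]
  refine Finset.sum_congr rfl fun j hj => ?_
  have hjn : j < m₂ + 1 - n := Finset.mem_range.mp hj
  have hL : (Matrix.of fun i k : Fin (s+1+n) =>
      ((fun i : ℕ => if i < s+1 then Pn i else Qn (i - (s+1))) (i : ℕ)).coeff
        (m₁ + 1 - 1 - colSel (s+1+n) (m₁+1) j k))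
      = keyL n s u (fun i k => (Pn i).coeff (if k < n then m₂ - k else j))
          (fun i k => (Qn i).coeff (if k < n then m₂ - k else j)) := by
    ext i k
    have hbi := i.isLt
    have hbk := k.isLt
    dsimp only [Matrix.of_apply, keyL, colSel]
    by_cases hi : (i : ℕ) < s + 1
    · rw [if_pos hi, if_pos hi]
      by_cases hks : (k : ℕ) < s
      · rw [if_pos (show (k:ℕ) + 1 < s+1+n by omega), if_pos hks]
        simp only [hu]
        congr 1 <;> omega
      · rw [if_neg hks]
        by_cases hk : (k : ℕ) + 1 < s + 1 + n
        · rw [if_pos hk, if_pos (show (k:ℕ) - s < n by omega)]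
          congr 1 <;> omega
        · rw [if_neg hk, if_neg (show ¬ (k:ℕ) - s < n by omega)]
          congr 1 <;> omega
    · rw [if_neg hi, if_neg hi]
      by_cases hks : (k : ℕ) < s
      · rw [if_pos (show (k:ℕ) + 1 < s+1+n by omega), if_pos hks]
        apply Polynomial.coeff_eq_zero_of_natDegree_lt
        have h1 : (Qn ((i:ℕ) - (s+1))).natDegree ≤ m₂ := natDegree_getD_le L₂ _ (by omega)
        omega
      · rw [if_neg hks]
        by_cases hk : (k : ℕ) + 1 < s + 1 + n
        · rw [if_pos hk, if_pos (show (k:ℕ) - s < n by omega)]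
          congr 1 <;> omega
        · rw [if_neg hk, if_neg (show ¬ (k:ℕ) - s < n by omega)]
          congr 1 <;> omega
  have hR : (Matrix.of fun i k : Fin (1+n) =>
      ((fun i : ℕ => if i = 0 then dpList L₁ else Qn (i - 1)) (i : ℕ)).coeff
        (m₂ + 1 - 1 - colSel (1+n) (m₂+1) j k))
      = keyR n s u (fun i k => (Pn i).coeff (if k < n then m₂ - k else j))
          (fun i k => (Qn i).coeff (if k < n then m₂ - k else j)) := by
    ext i k
    have hbi := i.isLt
    have hbk := k.isLt
    dsimp only [Matrix.of_apply, keyR, colSel]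
    by_cases hi : (i : ℕ) = 0
    · rw [if_pos hi, if_pos hi]
      by_cases hk : (k : ℕ) + 1 < 1 + n
      · rw [if_pos hk, show m₂ + 1 - 1 - (k:ℕ) = m₂ - (k:ℕ) by omega,
          hcoeff (m₂ - (k:ℕ)) (by omega)]
        simp only [hcdet]
        congr 1
        ext i' k'
        simp only [Matrix.of_apply, keyS]
        by_cases hk' : (k' : ℕ) < s
        · rw [if_pos hk', if_pos hk']
        · rw [if_neg hk', if_neg hk', if_pos (show (k:ℕ) < n by omega)]
      · rw [if_neg hk, show m₂ + 1 - 1 - (m₂ + 1 - 1 - j) = j by omega,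
          hcoeff j (by omega)]
        simp only [hcdet]
        congr 1
        ext i' k'
        simp only [Matrix.of_apply, keyS]
        by_cases hk' : (k' : ℕ) < s
        · rw [if_pos hk', if_pos hk']
        · rw [if_neg hk', if_neg hk', if_neg (show ¬ (k:ℕ) < n by omega)]
    · rw [if_neg hi, if_neg hi]
      by_cases hk : (k : ℕ) + 1 < 1 + n
      · rw [if_pos hk, if_pos (show (k:ℕ) < n by omega)]
        congr 1 <;> omega
      · rw [if_neg hk, if_neg (show ¬ (k:ℕ) < n by omega)]
        congr 1 <;> omega
  rw [hL, hR, key]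

end DPAux

/-- Case (1) of Lemma on determinant polynomials: if `m₂ = m₁ - t₁ + 1` then
`dp(P, Q) = dp(dp(P), Q)`. -/
theorem dp_append_case_nested (t1 t2 : ℕ) (ht1 : 1 ≤ t1) (ht2 : 1 ≤ t2)
    (p : Fin t1 → ℕ) (q : Fin t2 → ℕ)
    (hm : maxDeg (genPoly true t2 q) ≤ maxDeg (genPoly false t1 p))
    (ht : t1 + t2 ≤ maxDeg (genPoly false t1 p) + 1)
    (hcase : maxDeg (genPoly true t2 q) + t1 = maxDeg (genPoly false t1 p) + 1) :
    dpList (genPoly false t1 p ++ genPoly true t2 q)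
      = dpList (dpList (genPoly false t1 p) :: genPoly true t2 q) := by
  
  have l1 : (genPoly false t1 p).length = t1 := by simp [genPoly]
  exact DPAux.dp_append_nested_general _ _ (by rw [l1]; omega) hm (by rw [l1]; exact hcase)
end
end

section
/- Let P = (P_1,…,P_{t_1}) and Q = (Q_1,…,Q_{t_2}) with t_1, t_2 ≥ 1, m_1 = max_i deg P_i, m_2 = max_i deg Q_i, m_1 ≥ m_2, t_1 + t_2 ≤ m_1 + 1. If m_2 = m_1 − t_1, or if m_2 < m_1 − t_1 and t_2 = 1, then dp(P_1,…,P_{t_1},Q_1,…,Q_{t_2}) = pcdp(P) · dp(Q). -/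
open Polynomial

noncomputable section

variable {R : Type*} [CommRing R]

lemma maxDeg_append (A B : List (Polynomial R)) :
    maxDeg (A ++ B) = max (maxDeg A) (maxDeg B) := by
  unfold maxDeg
  induction A with
  | nil => simp
  | cons a as ih =>
    simp only [List.cons_append, List.map_cons, List.foldr_cons] at ih ⊢
    rw [ih, max_assoc]

lemma natDegree_le_maxDeg {L : List (Polynomial R)} {f : Polynomial R} (hf : f ∈ L) :
    f.natDegree ≤ maxDeg L := by
  unfold maxDeg
  induction L with
  | nil => simp at hf
  | cons a as ih =>
    rcases List.mem_cons.1 hf with rfl | h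
    · simp
    · simpa using Or.inr (ih h)

lemma coeff_sum_C_X (f : ℕ → R) (N n : ℕ) :
    (∑ j ∈ Finset.range N, Polynomial.C (f j) * Polynomial.X ^ j).coeff n
      = if n < N then f n else 0 := by
  rw [Polynomial.finset_sum_coeff]
  simp only [Polynomial.coeff_C_mul, Polynomial.coeff_X_pow, mul_ite, mul_one, mul_zero]
  simp [Finset.sum_ite_eq, Finset.mem_range]

lemma get_append_left' {α : Type*} (P Q : List α) (i : Fin (P ++ Q).length)
    (a : Fin P.length) (h : (i : ℕ) = (a : ℕ)) : (P ++ Q).get i = P.get a := by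
  rw [List.get_eq_getElem, List.get_eq_getElem, List.getElem_append]
  rw [dif_pos (by omega)]
  congr 1

lemma get_append_right' {α : Type*} (P Q : List α) (i : Fin (P ++ Q).length)
    (b : Fin Q.length) (h : (i : ℕ) = P.length + (b : ℕ)) : (P ++ Q).get i = Q.get b := by
  rw [List.get_eq_getElem, List.get_eq_getElem, List.getElem_append]
  rw [dif_neg (by omega)]
  congr 1
  omega

lemma det_block (P Q : List (Polynomial R)) (m1 j : ℕ)
    (ht2 : 1 ≤ Q.length)
    (hQ : ∀ f ∈ Q, f.natDegree + P.length ≤ m1) :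
    (Matrix.of fun i k : Fin (P ++ Q).length =>
        ((P ++ Q).get i).coeff (m1 - colSel (P ++ Q).length (m1 + 1) j k)).det
    = (Matrix.of fun a k : Fin P.length => (P.get a).coeff (m1 - (k : ℕ))).det *
      (Matrix.of fun b k : Fin Q.length =>
        (Q.get b).coeff (m1 - (if P.length + (k : ℕ) + 1 < P.length + Q.length
          then P.length + (k : ℕ) else m1 - j))).det := by
  have hLlen : (P ++ Q).length = P.length + Q.length := by simp
  set E : Fin P.length ⊕ Fin Q.length ≃ Fin (P ++ Q).length :=
    finSumFinEquiv.trans (finCongr hLlen.symm) with hE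
  have hvalL : ∀ a : Fin P.length, ((E (Sum.inl a) : Fin (P ++ Q).length) : ℕ) = (a : ℕ) := by
    intro a; simp [hE]
  have hvalR : ∀ b : Fin Q.length,
      ((E (Sum.inr b) : Fin (P ++ Q).length) : ℕ) = P.length + (b : ℕ) := by
    intro b; simp [hE]
  rw [← Matrix.det_submatrix_equiv_self E]
  have hsub : (Matrix.of fun i k : Fin (P ++ Q).length =>
        ((P ++ Q).get i).coeff (m1 - colSel (P ++ Q).length (m1 + 1) j k)).submatrix E E
      = Matrix.fromBlocks
          (Matrix.of fun a k : Fin P.length => (P.get a).coeff (m1 - (k : ℕ)))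
          (Matrix.of fun (a : Fin P.length) (k : Fin Q.length) =>
            (P.get a).coeff (m1 - (if P.length + (k : ℕ) + 1 < P.length + Q.length
              then P.length + (k : ℕ) else m1 - j)))
          0
          (Matrix.of fun b k : Fin Q.length =>
            (Q.get b).coeff (m1 - (if P.length + (k : ℕ) + 1 < P.length + Q.length
              then P.length + (k : ℕ) else m1 - j))) := by
    ext i k
    rcases i with a | b <;> rcases k with c | c <;>
      simp only [Matrix.submatrix_apply, Matrix.fromBlocks_apply₁₁, Matrix.fromBlocks_apply₁₂,
        Matrix.fromBlocks_apply₂₁, Matrix.fromBlocks_apply₂₂, Matrix.of_apply, Matrix.zero_apply]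
    · rw [get_append_left' P Q _ a (hvalL a)]
      congr 1
      rw [colSel, hvalL c, hLlen, if_pos (by omega)]
    · rw [get_append_left' P Q _ a (hvalL a)]
      congr 1
      rw [colSel, hvalR c, hLlen]
      rcases lt_or_ge (P.length + (c : ℕ) + 1) (P.length + Q.length) with h | h
      · rw [if_pos h, if_pos h]
      · rw [if_neg (by omega), if_neg (by omega)]
        omega
    · rw [get_append_right' P Q _ b (hvalR b)]
      apply Polynomial.coeff_eq_zero_of_natDegree_lt
      have hmem : Q.get b ∈ Q := List.get_mem Q b
      have := hQ (Q.get b) hmem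
      rw [colSel, hvalL c, hLlen, if_pos (by omega)]
      omega
    · rw [get_append_right' P Q _ b (hvalR b)]
      congr 1
      rw [colSel, hvalR c, hLlen]
      rcases lt_or_ge (P.length + (c : ℕ) + 1) (P.length + Q.length) with h | h
      · rw [if_pos h, if_pos h]
      · rw [if_neg (by omega), if_neg (by omega)]
        omega
  rw [hsub, Matrix.det_fromBlocks_zero₂₁]

lemma pcdp_eq_det (P : List (Polynomial R)) (h : P.length ≤ maxDeg P + 1) :
    pcdpList P
      = (Matrix.of fun a k : Fin P.length => (P.get a).coeff (maxDeg P - (k : ℕ))).det := by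
  rw [pcdpList, dpList, dpListQ, coeff_sum_C_X, if_pos (by omega)]
  congr 1
  ext a k
  simp only [Matrix.of_apply]
  congr 1
  rw [colSel]
  rcases lt_or_ge ((k : ℕ) + 1) P.length with hk | hk
  · rw [if_pos hk]
    omega
  · rw [if_neg (by omega)]
    have := k.isLt
    omega

theorem dp_general (P Q : List (Polynomial R)) (ht1 : 1 ≤ P.length) (ht2 : 1 ≤ Q.length)
    (ht : P.length + Q.length ≤ maxDeg P + 1)
    (hcase : maxDeg Q + P.length = maxDeg P
      ∨ (maxDeg Q + P.length < maxDeg P ∧ Q.length = 1)) :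
    dpList (P ++ Q) = Polynomial.C (pcdpList P) * dpList Q := by
  have hm2m1 : maxDeg Q + P.length ≤ maxDeg P := by rcases hcase with h | h <;> omega
  have hmax : maxDeg (P ++ Q) = maxDeg P := by
    rw [maxDeg_append]; omega
  have hlen : (P ++ Q).length = P.length + Q.length := by simp
  have hQdeg : ∀ f ∈ Q, f.natDegree + P.length ≤ maxDeg P := fun f hf =>
    le_trans (add_le_add_left (natDegree_le_maxDeg hf) _) hm2m1
  rw [pcdp_eq_det P (by omega)]
  set dA := (Matrix.of fun a k : Fin P.length =>
    (P.get a).coeff (maxDeg P - (k : ℕ))).det with hdA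
  have hLHS : dpList (P ++ Q) = ∑ j ∈ Finset.range (maxDeg P + 1 + 1 - (P ++ Q).length),
      Polynomial.C (dA * (Matrix.of fun b k : Fin Q.length =>
        (Q.get b).coeff (maxDeg P - (if P.length + (k : ℕ) + 1 < P.length + Q.length
          then P.length + (k : ℕ) else maxDeg P - j))).det) * Polynomial.X ^ j := by
    rw [dpList, dpListQ]
    simp only [hmax, Nat.add_sub_cancel]
    exact Finset.sum_congr rfl fun j _ => by
      rw [det_block P Q (maxDeg P) j ht2 hQdeg]
  rw [hLHS, dpList, dpListQ]
  simp only [Nat.add_sub_cancel]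
  rw [Finset.mul_sum]
  have hRHS : ∀ j, Polynomial.C dA * (Polynomial.C ((Matrix.of fun i k : Fin Q.length =>
      (Q.get i).coeff (maxDeg Q - colSel Q.length (maxDeg Q + 1) j k)).det) * Polynomial.X ^ j)
      = Polynomial.C (dA * (Matrix.of fun i k : Fin Q.length =>
      (Q.get i).coeff (maxDeg Q - colSel Q.length (maxDeg Q + 1) j k)).det) * Polynomial.X ^ j := by
    intro j
    rw [Polynomial.C_mul, mul_assoc]
  simp only [hRHS]
  rcases hcase with h1 | h2
  · -- case m2 + t1 = m1
    have hN : maxDeg P + 1 + 1 - (P ++ Q).length = maxDeg Q + 1 + 1 - Q.length := by omega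
    rw [hN]
    refine Finset.sum_congr rfl fun j hj => ?_
    rw [Finset.mem_range] at hj
    have hMM : (Matrix.of fun b k : Fin Q.length =>
        (Q.get b).coeff (maxDeg P - (if P.length + (k : ℕ) + 1 < P.length + Q.length
          then P.length + (k : ℕ) else maxDeg P - j)))
        = (Matrix.of fun i k : Fin Q.length =>
          (Q.get i).coeff (maxDeg Q - colSel Q.length (maxDeg Q + 1) j k)) := by
      ext b k
      simp only [Matrix.of_apply]
      congr 1
      rw [colSel]
      rcases lt_or_ge ((k : ℕ) + 1) Q.length with hk | hk
      · rw [if_pos (by omega), if_pos hk]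
        omega
      · rw [if_neg (by omega), if_neg (by omega)]
        omega
    rw [hMM]
  · -- case m2 + t1 < m1, t2 = 1
    obtain ⟨g, rfl⟩ := List.length_eq_one_iff.mp h2.2
    have hm2 : maxDeg [g] = g.natDegree := by
      simp [maxDeg]
    have hsum1 : ∀ j ∈ Finset.range (maxDeg P + 1 + 1 - (P ++ [g]).length),
        Polynomial.C (dA * (Matrix.of fun b k : Fin [g].length =>
          ([g].get b).coeff (maxDeg P - (if P.length + (k : ℕ) + 1 < P.length + [g].length
            then P.length + (k : ℕ) else maxDeg P - j))).det) * Polynomial.X ^ j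
        = Polynomial.C (dA * g.coeff j) * Polynomial.X ^ j := by
      intro j hj
      rw [Finset.mem_range] at hj
      congr 3
      rw [show (Matrix.of fun b k : Fin [g].length =>
          ([g].get b).coeff (maxDeg P - (if P.length + (k : ℕ) + 1 < P.length + [g].length
            then P.length + (k : ℕ) else maxDeg P - j))) = Matrix.of
            (fun _ _ : Fin 1 => g.coeff j) from ?_]
      · rw [Matrix.det_fin_one, Matrix.of_apply]
      · ext b k
        simp only [Matrix.of_apply]
        fin_cases b; fin_cases k
        simp only [List.length_singleton, List.get]
        rw [if_neg (by simp)]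
        congr 1
        simp at hj ⊢
        omega
    have hsum2 : ∀ j ∈ Finset.range (maxDeg [g] + 1 + 1 - [g].length),
        Polynomial.C (dA * (Matrix.of fun i k : Fin [g].length =>
          ([g].get i).coeff (maxDeg [g] - colSel [g].length (maxDeg [g] + 1) j k)).det)
            * Polynomial.X ^ j
        = Polynomial.C (dA * g.coeff j) * Polynomial.X ^ j := by
      intro j hj
      rw [Finset.mem_range] at hj
      congr 3
      rw [show (Matrix.of fun i k : Fin [g].length =>
          ([g].get i).coeff (maxDeg [g] - colSel [g].length (maxDeg [g] + 1) j k))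
          = Matrix.of (fun _ _ : Fin 1 => g.coeff j) from ?_]
      · rw [Matrix.det_fin_one, Matrix.of_apply]
      · ext b k
        simp only [Matrix.of_apply]
        fin_cases b; fin_cases k
        simp only [List.length_singleton, List.get]
        rw [colSel]
        rw [if_neg (by simp)]
        congr 1
        simp at hj ⊢
        omega
    rw [Finset.sum_congr rfl hsum1, Finset.sum_congr rfl hsum2]
    refine (Finset.sum_subset (Finset.range_subset_range.2 (by simp at hlen ⊢; omega)) ?_).symm
    intro j hj hnj
    rw [Finset.mem_range] at hj
    rw [Finset.mem_range, not_lt] at hnj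
    rw [Polynomial.coeff_eq_zero_of_natDegree_lt (by omega : g.natDegree < j)]
    simp

/-- Case (2) of Lemma on determinant polynomials: if `m₂ = m₁ - t₁`, or if
`m₂ < m₁ - t₁` and `t₂ = 1`, then `dp(P, Q) = pcdp(P) ⬝ dp(Q)`. -/
theorem dp_append_case_factor (t1 t2 : ℕ) (ht1 : 1 ≤ t1) (ht2 : 1 ≤ t2)
    (p : Fin t1 → ℕ) (q : Fin t2 → ℕ)
    (hm : maxDeg (genPoly true t2 q) ≤ maxDeg (genPoly false t1 p))
    (ht : t1 + t2 ≤ maxDeg (genPoly false t1 p) + 1)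
    (hcase : maxDeg (genPoly true t2 q) + t1 = maxDeg (genPoly false t1 p)
      ∨ (maxDeg (genPoly true t2 q) + t1 < maxDeg (genPoly false t1 p) ∧ t2 = 1)) :
    dpList (genPoly false t1 p ++ genPoly true t2 q)
      = Polynomial.C (pcdpList (genPoly false t1 p)) * dpList (genPoly true t2 q) := by
  have hP : (genPoly false t1 p).length = t1 := by simp [genPoly]
  have hQ : (genPoly true t2 q).length = t2 := by simp [genPoly]
  apply dp_general
  · rw [hP]; exact ht1
  · rw [hQ]; exact ht2
  · rw [hP, hQ]; exact ht
  · rw [hP, hQ]; exact hcase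
end
end
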